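/- Let φ : [0,1] → ℝ be continuous and let V₀, V₁ ∈ ℝ. Define V(x) := ∫₀¹ G(x,y) φ(y) dy + ((x − A₀)/D)(V₁ − V₀) + V₀ for x ∈ [0,1]. Then V is twice differentiable on [0,1] (one-sided at the endpoints) with V''(x) = φ(x) for every x ∈ [0,1], and V satisfies the Robin boundary conditions V(0) + A₀ V'(0) = V₀ and V(1) + A₁ V'(1) = V₁. -/

import Mathlib

/-- The function V(x) = ∫₀¹ G(x,y) φ(y) dy + ((x - A₀)/D)(V₁ - V₀) + V₀ is twice
differentiable on [0,1] (one-sided at the endpoints), V'' = φ on [0,1], and V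
satisfies the Robin boundary conditions V(0) + A₀V'(0) = V₀, V(1) + A₁V'(1) = V₁. -/
theorem stmt10 (A₀ A₁ : ℝ) (hD : 1 + A₁ - A₀ ≠ 0)
    (φ : ℝ → ℝ) (hφ : ContinuousOn φ (Set.Icc 0 1)) (V₀ V₁ : ℝ) :
    let D := 1 + A₁ - A₀
    let G : ℝ → ℝ → ℝ := fun x y =>
      if y ≤ x then (1 + A₁ - x) * (A₀ - y) / D else (1 + A₁ - y) * (A₀ - x) / D
    let V : ℝ → ℝ := fun x =>
      (∫ y in (0:ℝ)..1, G x y * φ y) + (x - A₀) / D * (V₁ - V₀) + V₀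
    ∃ V' V'' : ℝ → ℝ,
      (∀ x ∈ Set.Icc (0:ℝ) 1, HasDerivWithinAt V (V' x) (Set.Icc 0 1) x) ∧
      (∀ x ∈ Set.Icc (0:ℝ) 1, HasDerivWithinAt V' (V'' x) (Set.Icc 0 1) x) ∧
      (∀ x ∈ Set.Icc (0:ℝ) 1, V'' x = φ x) ∧
      V 0 + A₀ * V' 0 = V₀ ∧ V 1 + A₁ * V' 1 = V₁ := by
  intro D G V
  have hDeq : D = 1 + A₁ - A₀ := rfl
  have hD' : D ≠ 0 := hD
  -- continuous extension of φ
  set ψ : ℝ → ℝ := fun y => φ (min 1 (max 0 y)) with hψdef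
  have hψc : Continuous ψ := by
    apply hφ.comp_continuous (continuous_const.min (continuous_const.max continuous_id))
    intro y
    simp only [Set.mem_Icc]
    exact ⟨le_min zero_le_one (le_max_left _ _), min_le_left _ _⟩
  have hψeq : ∀ y ∈ Set.Icc (0:ℝ) 1, ψ y = φ y := by
    intro y hy
    simp only [hψdef, max_eq_right hy.1, min_eq_right hy.2]
  set c : ℝ → ℝ := fun y => (A₀ - y) * ψ y with hcdef
  set d : ℝ → ℝ := fun y => (1 + A₁ - y) * ψ y with hddef
  have hcc : Continuous c := by fun_prop
  have hdc : Continuous d := by fun_prop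
  set F : ℝ → ℝ := fun x => ∫ y in (0:ℝ)..x, c y with hFdef
  set H : ℝ → ℝ := fun x => ∫ y in (0:ℝ)..x, d y with hHdef
  have hFd : ∀ x, HasDerivAt F (c x) x := fun x =>
    intervalIntegral.integral_hasDerivAt_right (hcc.intervalIntegrable _ _)
      (hcc.stronglyMeasurable.stronglyMeasurableAtFilter) hcc.continuousAt
  have hHd : ∀ x, HasDerivAt H (d x) x := fun x =>
    intervalIntegral.integral_hasDerivAt_right (hdc.intervalIntegrable _ _)
      (hdc.stronglyMeasurable.stronglyMeasurableAtFilter) hdc.continuousAt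
  -- key identity: on [0,1] the Green integral splits
  have key : ∀ x ∈ Set.Icc (0:ℝ) 1,
      (∫ y in (0:ℝ)..1, G x y * φ y)
        = (1 + A₁ - x) / D * F x + (A₀ - x) / D * (H 1 - H x) := by
    intro x hx
    obtain ⟨hx0, hx1⟩ := hx
    have h1 : IntervalIntegrable (fun y => G x y * φ y) MeasureTheory.volume 0 x := by
      apply ((continuous_const.mul hcc : Continuous fun y => (1 + A₁ - x) / D * c y).intervalIntegrable 0 x).congr
      intro y hy
      rw [Set.uIoc_of_le hx0] at hy
      have hy1 : y ∈ Set.Icc (0:ℝ) 1 := ⟨hy.1.le, hy.2.trans hx1⟩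
      simp only [Pi.mul_apply, G, if_pos hy.2, hcdef, hψeq y hy1]
      ring
    have h2 : IntervalIntegrable (fun y => G x y * φ y) MeasureTheory.volume x 1 := by
      apply ((continuous_const.mul hdc : Continuous fun y => (A₀ - x) / D * d y).intervalIntegrable x 1).congr
      intro y hy
      rw [Set.uIoc_of_le hx1] at hy
      have hy1 : y ∈ Set.Icc (0:ℝ) 1 := ⟨hx0.trans hy.1.le, hy.2⟩
      simp only [Pi.mul_apply, G, if_neg (not_le.mpr hy.1), hddef, hψeq y hy1]
      ring
    rw [← intervalIntegral.integral_add_adjacent_intervals h1 h2]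
    have e1 : (∫ y in (0:ℝ)..x, G x y * φ y)
        = ∫ y in (0:ℝ)..x, (1 + A₁ - x) / D * c y := by
      apply intervalIntegral.integral_congr
      intro y hy
      rw [Set.uIcc_of_le hx0] at hy
      have hy1 : y ∈ Set.Icc (0:ℝ) 1 := ⟨hy.1, hy.2.trans hx1⟩
      simp only [Pi.mul_apply, G, if_pos hy.2, hcdef, hψeq y hy1]
      ring
    have e2 : (∫ y in x..(1:ℝ), G x y * φ y)
        = ∫ y in x..(1:ℝ), (A₀ - x) / D * d y := by
      apply intervalIntegral.integral_congr
      intro y hy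
      rw [Set.uIcc_of_le hx1] at hy
      have hy1 : y ∈ Set.Icc (0:ℝ) 1 := ⟨hx0.trans hy.1, hy.2⟩
      rcases le_or_gt y x with h | h
      · have hyx : y = x := le_antisymm h hy.1
        subst hyx
        simp only [G, if_pos le_rfl, hddef, hψeq y hy1]
        ring
      · simp only [G, if_neg (not_le.mpr h), hddef, hψeq y hy1]
        ring
    rw [e1, e2, intervalIntegral.integral_const_mul, intervalIntegral.integral_const_mul]
    have e3 : (∫ y in x..(1:ℝ), d y) = H 1 - H x := by
      rw [hHdef]
      rw [← intervalIntegral.integral_interval_sub_left (hdc.intervalIntegrable 0 1)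
        (hdc.intervalIntegrable 0 x)]
    rw [e3]
  -- explicit smooth representative
  set W : ℝ → ℝ := fun x =>
    (1 + A₁ - x) / D * F x + (A₀ - x) / D * (H 1 - H x) + (x - A₀) / D * (V₁ - V₀) + V₀
    with hWdef
  have hVW : ∀ x ∈ Set.Icc (0:ℝ) 1, V x = W x := by
    intro x hx
    simp only [V, hWdef, key x hx]
  refine ⟨fun x => (H x - F x - H 1 + V₁ - V₀) / D, φ, ?_, ?_, fun x _ => rfl, ?_, ?_⟩
  · -- first derivative
    intro x hx
    have hW : HasDerivAt W ((H x - F x - H 1 + V₁ - V₀) / D) x := by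
      have d1 : HasDerivAt (fun u : ℝ => (1 + A₁ - u) / D) (-1 / D) x := by
        simpa using ((hasDerivAt_id x).const_sub (1 + A₁)).div_const D
      have d2 : HasDerivAt (fun u : ℝ => (A₀ - u) / D) (-1 / D) x := by
        simpa using ((hasDerivAt_id x).const_sub A₀).div_const D
      have d3 : HasDerivAt (fun u : ℝ => (u - A₀) / D) (1 / D) x := by
        simpa using ((hasDerivAt_id x).sub_const A₀).div_const D
      have dHH : HasDerivAt (fun u => H 1 - H u) (-(d x)) x := (hHd x).const_sub (H 1)
      have := (((d1.mul (hFd x)).add (d2.mul dHH)).add (d3.mul_const (V₁ - V₀))).add_const V₀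
      refine this.congr_deriv ?_
      simp only [hcdef, hddef]
      ring
    exact hW.hasDerivWithinAt.congr (fun y hy => hVW y hy) (hVW x hx)
  · -- second derivative
    intro x hx
    have h : HasDerivAt (fun u => (H u - F u - H 1 + V₁ - V₀) / D) ((d x - c x) / D) x := by
      exact ((((hHd x).sub (hFd x)).sub_const (H 1)).add_const V₁ |>.sub_const V₀).div_const D
    have e : (d x - c x) / D = φ x := by
      rw [hddef, hcdef, ← hψeq x hx]
      rw [hDeq]
      field_simp
      ring
    rw [← e]
    exact h.hasDerivWithinAt
  · -- V 0 + A₀ * V' 0 = V₀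
    have h0 : V 0 = W 0 := hVW 0 (by norm_num)
    have hF0 : F 0 = 0 := intervalIntegral.integral_same
    have hH0 : H 0 = 0 := intervalIntegral.integral_same
    rw [h0, hWdef]
    simp only [hF0, hH0]
    field_simp
    ring
  · -- V 1 + A₁ * V' 1 = V₁
    have h1 : V 1 = W 1 := hVW 1 (by norm_num)
    rw [h1, hWdef, hDeq]
    field_simp
    ring
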